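/- arXiv:1001.3579 — 2 statements merged into one kernel-verified Lean document; each statement's English description precedes it below -/
import Mathlib

section
/- Let C > 0 be fixed. There exists a constant C′ > 0 such that for every q > 0, ∫_0^1 ζ^{−3} log((1+ζ)/(1−ζ)) exp(−C·q/ζ) dζ ≤ C′/q. In particular, for all x, y ∈ ℝ_+^d and s ∈ [−1,1]^d with q_+(x,y,s) > 0, the integral ∫_0^1 ζ^{−3} log((1+ζ)/(1−ζ)) exp(−C·q_+(x,y,s)/ζ) dζ is bounded by C′/q_+(x,y,s). -/
open MeasureTheory Real Set

set_option maxHeartbeats 1000000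

noncomputable section

/-- Euclidean norm on `Fin d → ℝ`. -/
def euclNorm (d : ℕ) (x : Fin d → ℝ) : ℝ := Real.sqrt (∑ i, x i ^ 2)

/-- The positive orthant `(0,∞)^d`. -/
def posOrth (d : ℕ) : Set (Fin d → ℝ) := {x | ∀ i, 0 < x i}

/-- `q₊(x,y,s) = |x|² + |y|² + 2 ∑ᵢ xᵢ yᵢ sᵢ`. -/
def qplus (d : ℕ) (x y s : Fin d → ℝ) : ℝ :=
  euclNorm d x ^ 2 + euclNorm d y ^ 2 + 2 * ∑ i, x i * y i * s i

/-- `q₋(x,y,s) = |x|² + |y|² - 2 ∑ᵢ xᵢ yᵢ sᵢ`. -/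
def qminus (d : ℕ) (x y s : Fin d → ℝ) : ℝ :=
  euclNorm d x ^ 2 + euclNorm d y ^ 2 - 2 * ∑ i, x i * y i * s i

/-- The measure `μ_α` on `ℝ₊^d` with density `x₁^{2α₁+1} ⋯ x_d^{2α_d+1}`. -/
def muAlpha (d : ℕ) (α : Fin d → ℝ) : Measure (Fin d → ℝ) :=
  (volume.restrict (posOrth d)).withDensity
    (fun x => ENNReal.ofReal (∏ i, x i ^ (2 * α i + 1)))

/-- Euclidean ball of radius `r` centered at `x`. -/
def euclBall (d : ℕ) (x : Fin d → ℝ) (r : ℝ) : Set (Fin d → ℝ) :=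
  {z | euclNorm d (z - x) < r}

/-- The one-dimensional measure `Π_b` on `[-1,1]`. -/
def PiOne (b : ℝ) : Measure ℝ :=
  if b = -(1/2) then
    (ENNReal.ofReal (Real.sqrt (2 * Real.pi)))⁻¹ • (Measure.dirac (-1) + Measure.dirac 1)
  else
    (volume.restrict (Set.Icc (-1 : ℝ) 1)).withDensity
      (fun u => ENNReal.ofReal ((1 - u ^ 2) ^ (b - 1/2) /
        (Real.sqrt Real.pi * (2 : ℝ) ^ b * Real.Gamma (b + 1/2))))

/-- The product measure `Π_β = Π_{β₁} ⊗ ⋯ ⊗ Π_{β_d}` on `[-1,1]^d`. -/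
def PiMeas (d : ℕ) (β : Fin d → ℝ) : Measure (Fin d → ℝ) :=
  Measure.pi (fun i => PiOne (β i))

/-- The Laguerre heat kernel `G_t^β(x,y)` (with `ζ = tanh t`). -/
def heatG (d : ℕ) (β : Fin d → ℝ) (t : ℝ) (x y : Fin d → ℝ) : ℝ :=
  ((1 - Real.tanh t ^ 2) / (2 * Real.tanh t)) ^ ((d : ℝ) + ∑ i, β i) *
    ∫ s, Real.exp (-(qplus d x y s) / (4 * Real.tanh t) -
      Real.tanh t * qminus d x y s / 4) ∂(PiMeas d β)

/-- The modified Laguerre heat kernel `G̃_t^{α,j}(x,y) = e^{-2t} x_j y_j G_t^{α+e_j}(x,y)`. -/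
def heatGmod (d : ℕ) (α : Fin d → ℝ) (j : Fin d) (t : ℝ) (x y : Fin d → ℝ) : ℝ :=
  Real.exp (-2 * t) * x j * y j *
    heatG d (fun i => α i + if i = j then 1 else 0) t x y

/-- The Laguerre–Poisson kernel, defined by subordination. -/
def poissonP (d : ℕ) (α : Fin d → ℝ) (t : ℝ) (x y : Fin d → ℝ) : ℝ :=
  (Real.sqrt Real.pi)⁻¹ *
    ∫ u in Set.Ioi (0 : ℝ), (Real.exp (-u) / Real.sqrt u) * heatG d α (t ^ 2 / (4 * u)) x y

/-- Partial derivative of `g` in the `j`-th coordinate at `x`. -/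
def coordDeriv (d : ℕ) (j : Fin d) (g : (Fin d → ℝ) → ℝ) (x : Fin d → ℝ) : ℝ :=
  deriv (fun u => g (Function.update x j u)) (x j)

/-- The operator `δ_j = ∂/∂x_j + x_j` acting on a function of `x`. -/
def deltaOp (d : ℕ) (j : Fin d) (g : (Fin d → ℝ) → ℝ) (x : Fin d → ℝ) : ℝ :=
  coordDeriv d j g x + x j * g x

/-- The operator `δ_j^* = -∂/∂x_j + x_j - (2α_j+1)/x_j` acting on a function of `x`. -/
def deltaStarOp (d : ℕ) (αj : ℝ) (j : Fin d) (g : (Fin d → ℝ) → ℝ) (x : Fin d → ℝ) : ℝ :=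
  -coordDeriv d j g x + x j * g x - (2 * αj + 1) / x j * g x


lemma exp_neg_le_inv' {a : ℝ} (ha : 0 < a) : Real.exp (-a) ≤ 1 / a := by
  rw [Real.exp_neg, one_div]
  have h1 : a ≤ Real.exp a := by linarith [Real.add_one_le_exp a]
  exact inv_anti₀ ha h1

lemma log_le_two_sqrt {t : ℝ} (ht : 0 < t) : Real.log t ≤ 2 * Real.sqrt t := by
  have hs : 0 < Real.sqrt t := Real.sqrt_pos.mpr ht
  have h1 : Real.log (Real.sqrt t) ≤ Real.sqrt t - 1 := Real.log_le_sub_one_of_pos hs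
  have h2 : Real.log (Real.sqrt t) = Real.log t / 2 := Real.log_sqrt ht.le
  linarith

/-- The substituted improper integral: `∫_{0}^{∞} x^{-2} e^{-a/x} dx = 1/a`. -/
lemma intA {a : ℝ} (ha : 0 < a) :
    IntegrableOn (fun x : ℝ => x ^ (-(2:ℝ)) * Real.exp (-(a/x))) (Set.Ioi 0) ∧
    (∫ x in Set.Ioi (0:ℝ), x ^ (-(2:ℝ)) * Real.exp (-(a/x))) = 1 / a := by
  have hf : IntegrableOn (fun y : ℝ => Real.exp (-a * y)) (Set.Ioi 0) :=
    exp_neg_integrableOn_Ioi 0 ha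
  have hval : (∫ y in Set.Ioi (0:ℝ), Real.exp (-a * y)) = 1 / a := by
    have h := integral_comp_mul_left_Ioi (fun y => Real.exp (-y)) 0 ha
    simp only [mul_zero, integral_exp_neg_Ioi, neg_zero, Real.exp_zero, smul_eq_mul,
      mul_one, neg_mul] at h ⊢
    rw [h, one_div]
  have hcongr : ∀ x ∈ Set.Ioi (0:ℝ),
      (|(-1 : ℝ)| * x ^ ((-1:ℝ) - 1)) • Real.exp (-a * x ^ (-1:ℝ))
        = x ^ (-(2:ℝ)) * Real.exp (-(a/x)) := by
    intro x hx
    have hx0 : (0:ℝ) < x := hx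
    rw [Real.rpow_neg_one, smul_eq_mul, abs_neg, abs_one, one_mul, div_eq_mul_inv, neg_mul,
      show ((-1:ℝ) - 1) = -(2:ℝ) by norm_num]
  constructor
  · have := (integrableOn_Ioi_comp_rpow_iff (fun y => Real.exp (-a * y))
      (p := -1) (by norm_num)).mpr hf
    exact (integrableOn_congr_fun hcongr measurableSet_Ioi).mp this
  · have := integral_comp_rpow_Ioi (fun y => Real.exp (-a * y)) (p := -1) (by norm_num)
    rw [← hval, ← this]
    exact setIntegral_congr_fun measurableSet_Ioi (fun x hx => (hcongr x hx).symm)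

/-- Core estimate. -/
lemma core (C : ℝ) (hC : 0 < C) (q : ℝ) (hq : 0 < q) :
    (∫ ζ in Set.Ioo (0 : ℝ) 1,
        ζ ^ (-(3 : ℝ)) * Real.log ((1 + ζ) / (1 - ζ)) * Real.exp (-(C * q / ζ))) ≤
      (60 / C) / q := by
  set a : ℝ := C * q with ha_def
  have ha : 0 < a := mul_pos hC hq
  set F : ℝ → ℝ := fun ζ => ζ ^ (-(3 : ℝ)) * Real.log ((1 + ζ) / (1 - ζ)) * Real.exp (-(a / ζ))
    with hF_def
  have hFmeas : Measurable F := by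
    rw [hF_def]
    have m1 : Measurable fun ζ : ℝ => ζ ^ (-(3:ℝ)) := by fun_prop
    have m2 : Measurable fun ζ : ℝ => Real.log ((1 + ζ) / (1 - ζ)) :=
      Real.measurable_log.comp ((measurable_const.add measurable_id).div
        (measurable_const.sub measurable_id))
    have m3 : Measurable fun ζ : ℝ => Real.exp (-(a / ζ)) :=
      Real.measurable_exp.comp ((measurable_const.div measurable_id).neg)
    exact (m1.mul m2).mul m3
  -- nonnegativity of F on Ioo 0 1
  have hFnn : ∀ ζ ∈ Set.Ioo (0:ℝ) 1, 0 ≤ F ζ := by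
    intro ζ hζ
    have h1 : (0:ℝ) < ζ := hζ.1
    have h2 : ζ < 1 := hζ.2
    have hlog : 0 ≤ Real.log ((1 + ζ) / (1 - ζ)) := by
      apply Real.log_nonneg
      rw [le_div_iff₀ (by linarith)]
      linarith
    positivity
  -- PIECE A
  have hg1 : IntegrableOn (fun x : ℝ => x ^ (-(2:ℝ)) * Real.exp (-(a/x))) (Set.Ioo 0 (1/2)) :=
    (intA ha).1.mono_set (fun x hx => hx.1)
  have hboundA : ∀ ζ ∈ Set.Ioo (0:ℝ) (1/2),
      F ζ ≤ 4 * (ζ ^ (-(2:ℝ)) * Real.exp (-(a/ζ))) := by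
    intro ζ hζ
    have h1 : (0:ℝ) < ζ := hζ.1
    have h2 : ζ < 1/2 := hζ.2
    have hden : (0:ℝ) < 1 - ζ := by linarith
    have hlog : Real.log ((1 + ζ) / (1 - ζ)) ≤ 4 * ζ := by
      have hpos : (0:ℝ) < (1 + ζ) / (1 - ζ) := by positivity
      have := Real.log_le_sub_one_of_pos hpos
      have heq : (1 + ζ) / (1 - ζ) - 1 = 2 * ζ / (1 - ζ) := by
        field_simp; ring
      have hle : 2 * ζ / (1 - ζ) ≤ 4 * ζ := by
        rw [div_le_iff₀ hden]
        nlinarith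
      linarith
    have hrw : ζ ^ (-(3:ℝ)) * ζ = ζ ^ (-(2:ℝ)) := by
      nth_rewrite 2 [← Real.rpow_one ζ]
      rw [← Real.rpow_add h1]
      norm_num
    have hz3 : (0:ℝ) ≤ ζ ^ (-(3:ℝ)) := (Real.rpow_pos_of_pos h1 _).le
    calc F ζ ≤ ζ ^ (-(3:ℝ)) * (4 * ζ) * Real.exp (-(a/ζ)) := by
          apply mul_le_mul_of_nonneg_right _ (Real.exp_pos _).le
          exact mul_le_mul_of_nonneg_left hlog hz3
      _ = 4 * (ζ ^ (-(2:ℝ)) * Real.exp (-(a/ζ))) := by rw [← hrw]; ring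
  have hFA : IntegrableOn F (Set.Ioo 0 (1/2)) := by
    apply Integrable.mono' (hg1.const_mul 4) (hFmeas.aestronglyMeasurable.restrict)
    filter_upwards [ae_restrict_mem measurableSet_Ioo] with ζ hζ
    rw [Real.norm_eq_abs, abs_of_nonneg (hFnn ζ ⟨hζ.1, by linarith [hζ.2]⟩)]
    exact hboundA ζ hζ
  have hintA : (∫ ζ in Set.Ioo (0:ℝ) (1/2), F ζ) ≤ 4 / a := by
    calc (∫ ζ in Set.Ioo (0:ℝ) (1/2), F ζ)
        ≤ ∫ ζ in Set.Ioo (0:ℝ) (1/2), 4 * (ζ ^ (-(2:ℝ)) * Real.exp (-(a/ζ))) :=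
          setIntegral_mono_on hFA (hg1.const_mul 4) measurableSet_Ioo hboundA
      _ = 4 * ∫ ζ in Set.Ioo (0:ℝ) (1/2), ζ ^ (-(2:ℝ)) * Real.exp (-(a/ζ)) :=
          integral_const_mul 4 _
      _ ≤ 4 * ∫ ζ in Set.Ioi (0:ℝ), ζ ^ (-(2:ℝ)) * Real.exp (-(a/ζ)) := by
          apply mul_le_mul_of_nonneg_left _ (by norm_num)
          apply setIntegral_mono_set (intA ha).1
          · filter_upwards [ae_restrict_mem measurableSet_Ioi] with x hx
            have : (0:ℝ) < x := hx
            positivity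
          · exact HasSubset.Subset.eventuallyLE (fun x hx => hx.1)
      _ = 4 / a := by rw [(intA ha).2]; ring
  -- PIECE B
  set h : ℝ → ℝ := fun ζ => (1 - ζ) ^ (-(1/2 : ℝ)) with hh_def
  have hhint : IntervalIntegrable h volume (1/2 : ℝ) 1 := by
    have h0 : IntervalIntegrable (fun x : ℝ => x ^ (-(1/2):ℝ)) volume 0 (1/2) :=
      intervalIntegral.intervalIntegrable_rpow' (by norm_num)
    have := h0.comp_sub_left 1
    norm_num at this
    exact this.symm
  have hhval : (∫ x in (1/2 : ℝ)..1, h x) ≤ 2 := by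
    rw [hh_def]
    rw [intervalIntegral.integral_comp_sub_left (fun x => x ^ (-(1/2):ℝ)) 1]
    norm_num
    rw [integral_rpow (Or.inl (by norm_num))]
    norm_num
    have h01 : ((1:ℝ)/2) ^ ((1:ℝ)/2) ≤ 1 :=
      Real.rpow_le_one (by norm_num) (by norm_num) (by norm_num)
    rw [div_le_iff₀ (by norm_num : (0:ℝ) < 1/2)]
    linarith
  have hhIntOn : IntegrableOn h (Set.Ico (1/2 : ℝ) 1) := by
    rw [integrableOn_Ico_iff_integrableOn_Ioo]
    exact hhint.1.mono_set Set.Ioo_subset_Ioc_self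
  have hhset : (∫ ζ in Set.Ico (1/2 : ℝ) 1, h ζ) ≤ 2 := by
    have e1 : (∫ ζ in Set.Ico (1/2 : ℝ) 1, h ζ) = ∫ ζ in Set.Ioc (1/2 : ℝ) 1, h ζ := by
      rw [integral_Ico_eq_integral_Ioo, integral_Ioc_eq_integral_Ioo]
    rw [e1, ← intervalIntegral.integral_of_le (by norm_num)]
    exact hhval
  have hboundB : ∀ ζ ∈ Set.Ico (1/2 : ℝ) 1, F ζ ≤ (24 / a) * h ζ := by
    intro ζ hζ
    have h1 : (1/2:ℝ) ≤ ζ := hζ.1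
    have h1' : (0:ℝ) < ζ := by linarith
    have h2 : ζ < 1 := hζ.2
    have hden : (0:ℝ) < 1 - ζ := by linarith
    -- ζ^{-3} ≤ 8
    have hz3 : ζ ^ (-(3:ℝ)) ≤ 8 := by
      rw [Real.rpow_neg h1'.le, show ((3:ℝ) = ((3:ℕ):ℝ)) by norm_num, Real.rpow_natCast]
      rw [inv_le_comm₀ (by positivity) (by norm_num)]
      calc (8:ℝ)⁻¹ = (1/2)^3 := by norm_num
        _ ≤ ζ ^ 3 := pow_le_pow_left₀ (by norm_num) h1 3
    -- log ≤ 3 * h ζ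
    have hsq2 : Real.sqrt 2 ≤ 3/2 := by
      have hs : Real.sqrt 2 ≤ Real.sqrt ((3/2)^2) := Real.sqrt_le_sqrt (by norm_num)
      rwa [Real.sqrt_sq (by norm_num : (0:ℝ) ≤ 3/2)] at hs
    have hhval' : h ζ = (Real.sqrt (1 - ζ))⁻¹ := by
      rw [hh_def]
      simp only
      rw [Real.rpow_neg hden.le, ← Real.sqrt_eq_rpow]
    have hlog : Real.log ((1 + ζ) / (1 - ζ)) ≤ 3 * h ζ := by
      have hstep1 : Real.log ((1 + ζ) / (1 - ζ)) ≤ Real.log (2 / (1 - ζ)) := by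
        apply Real.log_le_log (by positivity)
        gcongr
        linarith
      have hstep2 : Real.log (2 / (1 - ζ)) ≤ 2 * Real.sqrt (2 / (1 - ζ)) :=
        log_le_two_sqrt (by positivity)
      have hstep3 : Real.sqrt (2 / (1 - ζ)) = Real.sqrt 2 * (Real.sqrt (1 - ζ))⁻¹ := by
        rw [div_eq_mul_inv, Real.sqrt_mul (by norm_num), Real.sqrt_inv]
      have hinv_nn : (0:ℝ) ≤ (Real.sqrt (1 - ζ))⁻¹ := by positivity
      calc Real.log ((1 + ζ) / (1 - ζ)) ≤ 2 * (Real.sqrt 2 * (Real.sqrt (1 - ζ))⁻¹) := by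
            rw [← hstep3]; linarith
        _ ≤ 2 * ((3/2) * (Real.sqrt (1 - ζ))⁻¹) := by
            apply mul_le_mul_of_nonneg_left _ (by norm_num)
            exact mul_le_mul_of_nonneg_right hsq2 hinv_nn
        _ = 3 * h ζ := by rw [hhval']; ring
    -- exp ≤ 1/a
    have hexp : Real.exp (-(a / ζ)) ≤ 1 / a := by
      have : a ≤ a / ζ := by
        rw [le_div_iff₀ h1']
        nlinarith
      calc Real.exp (-(a / ζ)) ≤ Real.exp (-a) := by
            apply Real.exp_le_exp.mpr; linarith
        _ ≤ 1 / a := exp_neg_le_inv' ha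
    have hlog_nn : 0 ≤ Real.log ((1 + ζ) / (1 - ζ)) := by
      apply Real.log_nonneg
      rw [le_div_iff₀ hden]; linarith
    have hh_nn : 0 ≤ h ζ := by rw [hhval']; positivity
    have hz3nn : (0:ℝ) ≤ ζ ^ (-(3:ℝ)) := (Real.rpow_pos_of_pos h1' _).le
    calc F ζ = ζ ^ (-(3:ℝ)) * Real.log ((1 + ζ) / (1 - ζ)) * Real.exp (-(a/ζ)) := rfl
      _ ≤ 8 * (3 * h ζ) * (1/a) := by
          apply mul_le_mul
          · apply mul_le_mul hz3 hlog hlog_nn (by norm_num)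
          · exact hexp
          · exact (Real.exp_pos _).le
          · positivity
      _ = (24 / a) * h ζ := by ring
  have hFB : IntegrableOn F (Set.Ico (1/2 : ℝ) 1) := by
    apply Integrable.mono' (hhIntOn.const_mul (24 / a)) (hFmeas.aestronglyMeasurable.restrict)
    filter_upwards [ae_restrict_mem measurableSet_Ico] with ζ hζ
    rw [Real.norm_eq_abs, abs_of_nonneg (hFnn ζ ⟨by linarith [hζ.1], hζ.2⟩)]
    exact hboundB ζ hζ
  have hintB : (∫ ζ in Set.Ico (1/2 : ℝ) 1, F ζ) ≤ 48 / a := by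
    calc (∫ ζ in Set.Ico (1/2 : ℝ) 1, F ζ)
        ≤ ∫ ζ in Set.Ico (1/2 : ℝ) 1, (24 / a) * h ζ :=
          setIntegral_mono_on hFB (hhIntOn.const_mul (24 / a)) measurableSet_Ico hboundB
      _ = (24 / a) * ∫ ζ in Set.Ico (1/2 : ℝ) 1, h ζ := integral_const_mul _ _
      _ ≤ (24 / a) * 2 := mul_le_mul_of_nonneg_left hhset (by positivity)
      _ = 48 / a := by ring
  -- combine
  have hsplit : Set.Ioo (0:ℝ) 1 = Set.Ioo 0 (1/2) ∪ Set.Ico (1/2) 1 :=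
    (Set.Ioo_union_Ico_eq_Ioo (by norm_num) (by norm_num)).symm
  have hdisj : Disjoint (Set.Ioo (0:ℝ) (1/2)) (Set.Ico (1/2:ℝ) 1) :=
    Set.disjoint_left.mpr fun x hx hx' => absurd hx.2 (not_lt.mpr hx'.1)
  calc (∫ ζ in Set.Ioo (0:ℝ) 1, F ζ)
      = (∫ ζ in Set.Ioo (0:ℝ) (1/2), F ζ) + ∫ ζ in Set.Ico (1/2:ℝ) 1, F ζ := by
        rw [hsplit]
        exact setIntegral_union hdisj measurableSet_Ico hFA hFB
    _ ≤ 4 / a + 48 / a := add_le_add hintA hintB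
    _ ≤ (60 / C) / q := by
        have h52 : 4 / a + 48 / a = 52 / a := by ring
        rw [h52, ha_def, div_div]
        gcongr
        norm_num

theorem stmt3 (C : ℝ) (hC : 0 < C) :
    ∃ C' > (0 : ℝ),
      (∀ q > (0 : ℝ),
        (∫ ζ in Set.Ioo (0 : ℝ) 1,
            ζ ^ (-(3 : ℝ)) * Real.log ((1 + ζ) / (1 - ζ)) * Real.exp (-(C * q / ζ))) ≤
          C' / q) ∧
      ∀ (d : ℕ), 0 < d → ∀ x y s : Fin d → ℝ,
        (∀ i, 0 < x i) → (∀ i, 0 < y i) → (∀ i, s i ∈ Set.Icc (-1 : ℝ) 1) →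
        0 < qplus d x y s →
        (∫ ζ in Set.Ioo (0 : ℝ) 1,
            ζ ^ (-(3 : ℝ)) * Real.log ((1 + ζ) / (1 - ζ)) *
              Real.exp (-(C * qplus d x y s / ζ))) ≤
          C' / qplus d x y s := by
  refine ⟨60 / C, by positivity, fun q hq => core C hC q hq,
    fun d _ x y s _ _ _ hq => core C hC _ hq⟩
end
end

section
/- If x, x′, y ∈ ℝ_+^d satisfy |x − y| > 2|x − x′| and θ = λx + (1−λ)x′ for some λ ∈ [0,1], then for every s ∈ [−1,1]^d, (1/4)·q_±(x,y,s) ≤ q_±(θ,y,s) ≤ 4·q_±(x,y,s), for both choices of the sign ±. The same conclusion holds after exchanging the roles of x and y, i.e. if |x − y| > 2|y − y′| and θ = λy + (1−λ)y′ then (1/4)·q_±(x,y,s) ≤ q_±(x,θ,s) ≤ 4·q_±(x,y,s). -/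
open MeasureTheory Real Set

noncomputable section

namespace Aux

variable {d : ℕ}

def emb1 (d : ℕ) (x : Fin d → ℝ) : EuclideanSpace ℝ (Fin d × Fin 2) :=
  WithLp.toLp 2 (fun p : Fin d × Fin 2 => if p.2 = 0 then x p.1 else 0)

def emb2 (d : ℕ) (y s : Fin d → ℝ) : EuclideanSpace ℝ (Fin d × Fin 2) :=
  WithLp.toLp 2 (fun p : Fin d × Fin 2 => if p.2 = 0 then y p.1 * s p.1 else y p.1 * Real.sqrt (1 - s p.1 ^ 2))

lemma normsq (v : EuclideanSpace ℝ (Fin d × Fin 2)) : ‖v‖ ^ 2 = ∑ p, v p ^ 2 := by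
  rw [EuclideanSpace.norm_eq, Real.sq_sqrt (by positivity)]
  simp [Real.norm_eq_abs, sq_abs]

lemma qminus_sum (x y s : Fin d → ℝ) :
    qminus d x y s = ∑ i, (x i ^ 2 + y i ^ 2 - 2 * (x i * y i * s i)) := by
  unfold qminus euclNorm
  rw [Real.sq_sqrt (by positivity), Real.sq_sqrt (by positivity),
    Finset.sum_sub_distrib, Finset.sum_add_distrib, Finset.mul_sum]

lemma qminus_eq (x y s : Fin d → ℝ) (hs : ∀ i, s i ∈ Set.Icc (-1 : ℝ) 1) :
    qminus d x y s = ‖emb1 d x - emb2 d y s‖ ^ 2 := by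
  rw [normsq, qminus_sum, Fintype.sum_prod_type]
  refine Finset.sum_congr rfl fun i _ => ?_
  have h1 : (0:ℝ) ≤ 1 - s i ^ 2 := by
    have := hs i; simp only [Set.mem_Icc] at this; nlinarith [this.1, this.2]
  rw [Fin.sum_univ_two]
  simp only [PiLp.sub_apply, emb1, emb2]
  norm_num
  have h2 : Real.sqrt (1 - s i ^ 2) ^ 2 = 1 - s i ^ 2 := Real.sq_sqrt h1
  nlinarith [h2]

lemma eucl_sq (v : Fin d → ℝ) : euclNorm d v ^ 2 = ∑ i, v i ^ 2 :=
  Real.sq_sqrt (by positivity)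

lemma eucl_nonneg (v : Fin d → ℝ) : 0 ≤ euclNorm d v := Real.sqrt_nonneg _

lemma emb1_sub_norm (x x' : Fin d → ℝ) : ‖emb1 d x - emb1 d x'‖ = euclNorm d (x - x') := by
  rw [EuclideanSpace.norm_eq, euclNorm]
  congr 1
  rw [Fintype.sum_prod_type]
  refine Finset.sum_congr rfl fun i _ => ?_
  rw [Fin.sum_univ_two]
  simp [emb1, Real.norm_eq_abs, sq_abs]

lemma emb2_sub_norm (y y' s : Fin d → ℝ) (hs : ∀ i, s i ∈ Set.Icc (-1 : ℝ) 1) :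
    ‖emb2 d y s - emb2 d y' s‖ = euclNorm d (y - y') := by
  rw [EuclideanSpace.norm_eq, euclNorm]
  congr 1
  rw [Fintype.sum_prod_type]
  refine Finset.sum_congr rfl fun i _ => ?_
  have h1 : (0:ℝ) ≤ 1 - s i ^ 2 := by
    have := hs i; simp only [Set.mem_Icc] at this; nlinarith [this.1, this.2]
  have h2 : Real.sqrt (1 - s i ^ 2) ^ 2 = 1 - s i ^ 2 := Real.sq_sqrt h1
  rw [Fin.sum_univ_two]
  simp only [PiLp.sub_apply, emb2, Pi.sub_apply, Real.norm_eq_abs, sq_abs]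
  norm_num
  nlinarith [h2]

lemma emb1_comb (x x' : Fin d → ℝ) (lam : ℝ) :
    emb1 d (lam • x + (1 - lam) • x') = lam • emb1 d x + (1 - lam) • emb1 d x' := by
  ext p
  simp only [emb1, PiLp.add_apply, PiLp.smul_apply, Pi.add_apply, Pi.smul_apply, smul_eq_mul]
  split <;> ring

lemma emb2_comb (y y' s : Fin d → ℝ) (lam : ℝ) :
    emb2 d (lam • y + (1 - lam) • y') s = lam • emb2 d y s + (1 - lam) • emb2 d y' s := by
  ext p
  simp only [emb2, PiLp.add_apply, PiLp.smul_apply, Pi.add_apply, Pi.smul_apply, smul_eq_mul]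
  split <;> ring

lemma core {E : Type*} [NormedAddCommGroup E] [NormedSpace ℝ E]
    (X X' Y : E) (lam : ℝ) (h0 : 0 ≤ lam) (h1 : lam ≤ 1)
    (h : 2 * ‖X - X'‖ < ‖X - Y‖) :
    1 / 4 * ‖X - Y‖ ^ 2 ≤ ‖(lam • X + (1 - lam) • X') - Y‖ ^ 2 ∧
      ‖(lam • X + (1 - lam) • X') - Y‖ ^ 2 ≤ 4 * ‖X - Y‖ ^ 2 := by
  set Θ := lam • X + (1 - lam) • X' with hΘ
  have hdiff : X - Θ = (1 - lam) • (X - X') := by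
    rw [hΘ]; module
  have hXΘ : ‖X - Θ‖ ≤ ‖X - X'‖ := by
    rw [hdiff, norm_smul, Real.norm_eq_abs, abs_of_nonneg (by linarith)]
    nlinarith [norm_nonneg (X - X')]
  have t1 : ‖Θ - Y‖ ≤ ‖Θ - X‖ + ‖X - Y‖ := norm_sub_le_norm_sub_add_norm_sub _ _ _
  have t2 : ‖X - Y‖ ≤ ‖X - Θ‖ + ‖Θ - Y‖ := norm_sub_le_norm_sub_add_norm_sub _ _ _
  have t3 : ‖Θ - X‖ = ‖X - Θ‖ := norm_sub_rev _ _
  have n1 : (0:ℝ) ≤ ‖Θ - Y‖ := norm_nonneg _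
  have n2 : (0:ℝ) ≤ ‖X - Y‖ := norm_nonneg _
  have n3 : (0:ℝ) ≤ ‖X - X'‖ := norm_nonneg _
  constructor
  · nlinarith
  · nlinarith

lemma qminus_lower (x y s : Fin d → ℝ) (hx : ∀ i, 0 < x i) (hy : ∀ i, 0 < y i)
    (hs : ∀ i, s i ∈ Set.Icc (-1 : ℝ) 1) :
    euclNorm d (x - y) ^ 2 ≤ qminus d x y s := by
  rw [qminus_sum, eucl_sq]
  refine Finset.sum_le_sum fun i _ => ?_
  have hsi := hs i; simp only [Set.mem_Icc] at hsi
  simp only [Pi.sub_apply]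
  nlinarith [mul_le_mul_of_nonneg_left hsi.2 (mul_pos (hx i) (hy i)).le]

lemma keyfirst (x x' y s : Fin d → ℝ) (lam : ℝ)
    (hx : ∀ i, 0 < x i) (hy : ∀ i, 0 < y i)
    (hs : ∀ i, s i ∈ Set.Icc (-1:ℝ) 1) (h0 : 0 ≤ lam) (h1 : lam ≤ 1)
    (hfar : euclNorm d (x - y) > 2 * euclNorm d (x - x')) :
    1/4 * qminus d x y s ≤ qminus d (lam • x + (1-lam) • x') y s ∧
      qminus d (lam • x + (1-lam) • x') y s ≤ 4 * qminus d x y s := by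
  have hXY : euclNorm d (x - y) ≤ ‖emb1 d x - emb2 d y s‖ := by
    have h2 := qminus_lower x y s hx hy hs
    rw [qminus_eq x y s hs] at h2
    nlinarith [eucl_nonneg (x - y), norm_nonneg (emb1 d x - emb2 d y s)]
  have hfar' : 2 * ‖emb1 d x - emb1 d x'‖ < ‖emb1 d x - emb2 d y s‖ := by
    rw [emb1_sub_norm]; linarith
  have h := core (emb1 d x) (emb1 d x') (emb2 d y s) lam h0 h1 hfar'
  rw [qminus_eq _ _ _ hs, qminus_eq _ _ _ hs, emb1_comb]
  exact h

lemma keysecond (x y y' s : Fin d → ℝ) (lam : ℝ)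
    (hx : ∀ i, 0 < x i) (hy : ∀ i, 0 < y i)
    (hs : ∀ i, s i ∈ Set.Icc (-1:ℝ) 1) (h0 : 0 ≤ lam) (h1 : lam ≤ 1)
    (hfar : euclNorm d (x - y) > 2 * euclNorm d (y - y')) :
    1/4 * qminus d x y s ≤ qminus d x (lam • y + (1-lam) • y') s ∧
      qminus d x (lam • y + (1-lam) • y') s ≤ 4 * qminus d x y s := by
  have hXY : euclNorm d (x - y) ≤ ‖emb2 d y s - emb1 d x‖ := by
    rw [norm_sub_rev]
    have h2 := qminus_lower x y s hx hy hs
    rw [qminus_eq x y s hs] at h2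
    nlinarith [eucl_nonneg (x - y), norm_nonneg (emb1 d x - emb2 d y s)]
  have hfar' : 2 * ‖emb2 d y s - emb2 d y' s‖ < ‖emb2 d y s - emb1 d x‖ := by
    rw [emb2_sub_norm _ _ _ hs]; linarith
  have h := core (emb2 d y s) (emb2 d y' s) (emb1 d x) lam h0 h1 hfar'
  rw [qminus_eq _ _ _ hs, qminus_eq _ _ _ hs, emb2_comb]
  rw [norm_sub_rev (emb1 d x), norm_sub_rev (emb1 d x)]
  exact h

lemma qplus_eq_qminus (x y s : Fin d → ℝ) :
    qplus d x y s = qminus d x y (fun i => -s i) := by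
  unfold qplus qminus
  simp only [mul_neg, Finset.sum_neg_distrib]
  ring

lemma neg_mem_Icc (s : Fin d → ℝ) (hs : ∀ i, s i ∈ Set.Icc (-1:ℝ) 1) :
    ∀ i, (fun i => -s i) i ∈ Set.Icc (-1:ℝ) 1 := by
  intro i
  have := hs i; simp only [Set.mem_Icc] at this ⊢
  constructor <;> linarith [this.1, this.2]

end Aux

theorem stmt4 (d : ℕ) (hd : 0 < d) :
    (∀ x x' y s : Fin d → ℝ, ∀ lam : ℝ,
      (∀ i, 0 < x i) → (∀ i, 0 < x' i) → (∀ i, 0 < y i) →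
      (∀ i, s i ∈ Set.Icc (-1 : ℝ) 1) → lam ∈ Set.Icc (0 : ℝ) 1 →
      euclNorm d (x - y) > 2 * euclNorm d (x - x') →
      (1 / 4 * qplus d x y s ≤ qplus d (lam • x + (1 - lam) • x') y s ∧
        qplus d (lam • x + (1 - lam) • x') y s ≤ 4 * qplus d x y s) ∧
      (1 / 4 * qminus d x y s ≤ qminus d (lam • x + (1 - lam) • x') y s ∧
        qminus d (lam • x + (1 - lam) • x') y s ≤ 4 * qminus d x y s)) ∧
    (∀ x y y' s : Fin d → ℝ, ∀ lam : ℝ,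
      (∀ i, 0 < x i) → (∀ i, 0 < y i) → (∀ i, 0 < y' i) →
      (∀ i, s i ∈ Set.Icc (-1 : ℝ) 1) → lam ∈ Set.Icc (0 : ℝ) 1 →
      euclNorm d (x - y) > 2 * euclNorm d (y - y') →
      (1 / 4 * qplus d x y s ≤ qplus d x (lam • y + (1 - lam) • y') s ∧
        qplus d x (lam • y + (1 - lam) • y') s ≤ 4 * qplus d x y s) ∧
      (1 / 4 * qminus d x y s ≤ qminus d x (lam • y + (1 - lam) • y') s ∧
        qminus d x (lam • y + (1 - lam) • y') s ≤ 4 * qminus d x y s)) := by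
  constructor
  · intro x x' y s lam hx hx' hy hs hlam hfar
    obtain ⟨h0, h1⟩ := hlam
    refine ⟨?_, Aux.keyfirst x x' y s lam hx hy hs h0 h1 hfar⟩
    simp only [Aux.qplus_eq_qminus]
    exact Aux.keyfirst x x' y _ lam hx hy (Aux.neg_mem_Icc s hs) h0 h1 hfar
  · intro x y y' s lam hx hy hy' hs hlam hfar
    obtain ⟨h0, h1⟩ := hlam
    refine ⟨?_, Aux.keysecond x y y' s lam hx hy hs h0 h1 hfar⟩
    simp only [Aux.qplus_eq_qminus]
    exact Aux.keysecond x y y' _ lam hx hy (Aux.neg_mem_Icc s hs) h0 h1 hfar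
end
end
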